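/- Serial dictatorship outcomes are Pareto optimal: for any permutation π of the agents and any b ∈ Prio(N, A, R, π), there is no alternative c ∈ A such that c R_i b for all agents i and c P_j b for some agent j. -/

import Mathlib

/-- The set of `r`-maximal elements of `B`. -/
def maxSet {A : Type*} [DecidableEq A] (r : A → A → Prop) [DecidableRel r]
    (B : Finset A) : Finset A :=
  B.filter (fun x => ∀ y ∈ B, r x y)

/-- Serial dictatorship outcome set: agents `π 0, π 1, …` successively refine `B`. -/
def prio {A : Type*} [DecidableEq A] {n : ℕ} (R : Fin n → A → A → Prop)
    [∀ i, DecidableRel (R i)] (π : Equiv.Perm (Fin n)) (B : Finset A) : Finset A :=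
  (List.ofFn fun k => π k).foldl (fun S i => maxSet (R i) S) B

/-- RSD probability of alternative `a`: average over all permutations of the
uniform lottery on the serial dictatorship outcome set. -/
def rsd {A : Type*} [Fintype A] [DecidableEq A] {n : ℕ} (R : Fin n → A → A → Prop)
    [∀ i, DecidableRel (R i)] (a : A) : ℚ :=
  (∑ π : Equiv.Perm (Fin n),
      if a ∈ prio R π Finset.univ then ((prio R π Finset.univ).card : ℚ)⁻¹ else 0) /
    (Nat.factorial n : ℚ)


lemma foldl_maxSet_subset {A : Type*} [DecidableEq A] {n : ℕ} (R : Fin n → A → A → Prop)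
    [∀ i, DecidableRel (R i)] (l : List (Fin n)) (B : Finset A) :
    l.foldl (fun S i => maxSet (R i) S) B ⊆ B := by
  induction l generalizing B with
  | nil => simp
  | cons i l ih =>
    intro x hx
    have := ih (maxSet (R i) B) hx
    exact Finset.filter_subset _ _ this

lemma key_lemma {A : Type*} [DecidableEq A] {n : ℕ} (R : Fin n → A → A → Prop)
    [∀ i, DecidableRel (R i)] (htrans : ∀ i, Transitive (R i))
    (l : List (Fin n)) (B : Finset A) (b c : A)
    (hc : ∀ i, R i c b) (hcB : c ∈ B)
    (hb : b ∈ l.foldl (fun S i => maxSet (R i) S) B) :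
    c ∈ l.foldl (fun S i => maxSet (R i) S) B ∧ ∀ i ∈ l, R i b c := by
  induction l generalizing B with
  | nil => exact ⟨hcB, by simp⟩
  | cons i l ih =>
    simp only [List.foldl_cons] at hb ⊢
    have hbm : b ∈ maxSet (R i) B := foldl_maxSet_subset R l _ hb
    rw [maxSet, Finset.mem_filter] at hbm
    have hcm : c ∈ maxSet (R i) B := by
      rw [maxSet, Finset.mem_filter]
      exact ⟨hcB, fun y hy => htrans i (hc i) (hbm.2 y hy)⟩
    obtain ⟨h1, h2⟩ := ih (maxSet (R i) B) hcm hb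
    refine ⟨h1, ?_⟩
    intro j hj
    rcases List.mem_cons.mp hj with rfl | hj
    · exact hbm.2 c hcB
    · exact h2 j hj

/-- serial dictatorship outcomes are Pareto optimal. -/
theorem stmt_12 {A : Type*} [Fintype A] [DecidableEq A] [Nonempty A] {n : ℕ}
    (R : Fin n → A → A → Prop) [∀ i, DecidableRel (R i)]
    (htot : ∀ i, Total (R i)) (htrans : ∀ i, Transitive (R i))
    (π : Equiv.Perm (Fin n)) (b : A) (hb : b ∈ prio R π Finset.univ) :
    ¬ ∃ c : A, (∀ i, R i c b) ∧ (∃ j, R j c b ∧ ¬ R j b c) := by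
  rintro ⟨c, hall, j, hcb, hnbc⟩
  have := key_lemma R htrans (List.ofFn fun k => π k) Finset.univ b c hall
      (Finset.mem_univ c) hb
  exact hnbc (this.2 j (by simp [List.mem_ofFn]; exact ⟨π.symm j, π.apply_symm_apply j⟩))
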